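/- Running PropReq on an internal node n of a multilevel clustering with local buses neither loses nor duplicates requirements: each requirement r in the initial requirement set R(n) is, after PropReq terminates, either still in the requirement set of n or in the requirement set of exactly one child of n (and in no other node), and the requirement set remaining at n together with the sets of requirements moved into the individual children forms a partition of the initial set R(n). In particular, if before the call the requirement sets of all nodes of the tree are pairwise disjoint with union equal to J, the same holds after the call. -/

import Mathlib

attribute [local instance] Classical.propDecidable

/-- A multilevel clustering with local buses: each node carries an element set `A`
(indices of plant components), a list `B` of bus children, a list `M` of non-bus
children, and a requirement index set `R`. -/
inductive MLC (I J : Type) : Type where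
  | mk : Finset I → List (MLC I J) → List (MLC I J) → Finset J → MLC I J

namespace MLC

variable {I J : Type}

/-- The element set `A(n)` of a node. -/
def elems : MLC I J → Finset I | mk A _ _ _ => A
/-- The bus children `B(n)` of a node. -/
def busCh : MLC I J → List (MLC I J) | mk _ B _ _ => B
/-- The non-bus children `M(n)` of a node. -/
def nonbusCh : MLC I J → List (MLC I J) | mk _ _ M _ => M
/-- The requirement index set `R(n)` of a node. -/
def reqs : MLC I J → Finset J | mk _ _ _ R => R
/-- All children `B(n) ∪ M(n)` of a node. -/
def children (t : MLC I J) : List (MLC I J) := t.busCh ++ t.nonbusCh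
/-- Replace the requirement set carried by a node. -/
def setReqs : MLC I J → Finset J → MLC I J | mk A B M _, R' => mk A B M R'

/-- Well-formedness of a multilevel clustering with local buses: a leaf has a
singleton element set and no children; an internal node has at least two children,
whose element sets are nonempty, pairwise disjoint and whose union is the node's
element set. -/
inductive WF : MLC I J → Prop where
  | leaf : ∀ (A : Finset I) (R : Finset J), A.card = 1 → WF (mk A [] [] R)
  | node : ∀ (A : Finset I) (B M : List (MLC I J)) (R : Finset J),
      2 ≤ (B ++ M).length →
      (∀ c ∈ B ++ M, (elems c).Nonempty) →
      (B ++ M).Pairwise (fun c d => Disjoint (elems c) (elems d)) →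
      ((B ++ M).map elems).foldr (· ∪ ·) ∅ = A →
      (∀ c ∈ B ++ M, WF c) →
      WF (mk A B M R)

end MLC

variable {I J : Type}

/-- Requirement `r` is related to cluster `c`: some plant index in the element set of
`c` is involved in `r` according to the domain mapping matrix `PR`. -/
def rel (PR : I → J → Prop) (r : J) (c : MLC I J) : Prop := ∃ p ∈ c.elems, PR p r

/-- The sublist of clusters of `cs` related to requirement `r`. -/
noncomputable def relF (PR : I → J → Prop) (r : J) (cs : List (MLC I J)) :
    List (MLC I J) :=
  cs.filter fun c => decide (rel PR r c)

/-- The requirements of `R` that stay at a node with bus children `B` and non-bus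
children `M`: those for which neither exactly one non-bus child is related, nor
(no non-bus child and exactly one bus child is related). -/
noncomputable def stayReqs (PR : I → J → Prop) (B M : List (MLC I J)) (R : Finset J) :
    Finset J :=
  R.filter fun r =>
    ¬ (relF PR r M).length = 1 ∧ ¬ ((relF PR r M) = [] ∧ (relF PR r B).length = 1)

/-- The requirements of `R` moved by PropReq into the non-bus child `c`:
`c` is the unique related non-bus cluster. -/
noncomputable def toNonbus (PR : I → J → Prop) (M : List (MLC I J)) (R : Finset J)
    (c : MLC I J) : Finset J :=
  R.filter fun r => relF PR r M = [c]

/-- The requirements of `R` moved by PropReq into the bus child `c`: no non-bus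
cluster is related and `c` is the unique related bus cluster. -/
noncomputable def toBus (PR : I → J → Prop) (B M : List (MLC I J)) (R : Finset J)
    (c : MLC I J) : Finset J :=
  R.filter fun r => relF PR r M = [] ∧ relF PR r B = [c]

/-- All plant indices involved in some requirement of `R`. -/
noncomputable def involved (PR : I → J → Prop) [Fintype I] (R : Finset J) : Finset I :=
  Finset.univ.filter fun i => ∃ r ∈ R, PR i r

/-- The subroutine PropReq: distributes the requirements of a node over the node
itself and its bus and non-bus children, and returns (as second component) the
accumulator set `P` of all plant indices involved in the requirements that remain. -/
noncomputable def propReq (PR : I → J → Prop) [Fintype I] :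
    MLC I J → MLC I J × Finset I
  | .mk A B M R =>
    (.mk A (B.map fun c => c.setReqs (c.reqs ∪ toBus PR B M R c))
           (M.map fun c => c.setReqs (c.reqs ∪ toNonbus PR M R c))
           (stayReqs PR B M R),
     involved PR (stayReqs PR B M R))

/-- The output tree of TransformCtoT: each node carries the element set of the
corresponding cluster together with its synthesis subproblem, i.e. a set of plant
indices and a set of requirement indices. -/
inductive SPTree (I J : Type) : Type where
  | mk : Finset I → Finset I → Finset J → List (SPTree I J) → SPTree I J

namespace SPTree

/-- Element set of the cluster corresponding to an output node. -/
def elemsS : SPTree I J → Finset I | mk A _ _ _ => A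
/-- Plant index set of the synthesis subproblem of an output node. -/
def plants : SPTree I J → Finset I | mk _ P _ _ => P
/-- Requirement index set of the synthesis subproblem of an output node. -/
def sreqs : SPTree I J → Finset J | mk _ _ R _ => R
/-- Children of an output node. -/
def chs : SPTree I J → List (SPTree I J) | mk _ _ _ cs => cs

end SPTree

/-- TransformCtoT (with the requirements pushed down by the parent passed as the
extra argument `Rin`): at a leaf it outputs the subproblem consisting of the leaf's
element together with all plants involved in its requirements; at an internal node
it performs PropReq, keeps the remaining requirements together with the plants they
involve, and recursively processes every bus child and every non-bus child with the
requirement sets moved into them. -/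
noncomputable def transform (PR : I → J → Prop) [Fintype I] :
    MLC I J → Finset J → SPTree I J
  | .mk A B M R, Rin =>
    if B ++ M = [] then
      SPTree.mk A (A ∪ involved PR (R ∪ Rin)) (R ∪ Rin) []
    else
      SPTree.mk A (involved PR (stayReqs PR B M (R ∪ Rin)))
        (stayReqs PR B M (R ∪ Rin))
        ((B.attach.map fun ⟨c, _hc⟩ => transform PR c (toBus PR B M (R ∪ Rin) c)) ++
         (M.attach.map fun ⟨c, _hc⟩ => transform PR c (toNonbus PR M (R ∪ Rin) c)))

mutual
/-- Number of occurrences of requirement index `j` among the requirement sets of the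
nodes of a multilevel clustering. -/
noncomputable def reqCountM (j : J) : MLC I J → ℕ
  | .mk _ B M R => (if j ∈ R then 1 else 0) + reqCountL j B + reqCountL j M
noncomputable def reqCountL (j : J) : List (MLC I J) → ℕ
  | [] => 0
  | c :: cs => reqCountM j c + reqCountL j cs
end

mutual
/-- Number of occurrences of requirement index `j` among the requirement sets of the
synthesis subproblems of the nodes of an output tree. -/
noncomputable def reqCountS (j : J) : SPTree I J → ℕ
  | .mk _ _ R cs => (if j ∈ R then 1 else 0) + reqCountSL j cs
noncomputable def reqCountSL (j : J) : List (SPTree I J) → ℕ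
  | [] => 0
  | c :: cs => reqCountS j c + reqCountSL j cs
end

mutual
/-- The list of all nodes of an output tree. -/
def allNodes : SPTree I J → List (SPTree I J)
  | .mk A P R cs => .mk A P R cs :: allNodesL cs
def allNodesL : List (SPTree I J) → List (SPTree I J)
  | [] => []
  | c :: cs => allNodes c ++ allNodesL cs
end

mutual
/-- All requirement sets in a multilevel clustering are empty. -/
def allReqsEmpty : MLC I J → Prop
  | .mk _ B M R => R = ∅ ∧ allReqsEmptyL B ∧ allReqsEmptyL M
def allReqsEmptyL : List (MLC I J) → Prop
  | [] => True
  | c :: cs => allReqsEmpty c ∧ allReqsEmptyL cs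
end

mutual
/-- The list of leaves of a multilevel clustering. -/
def leaves : MLC I J → List (MLC I J)
  | .mk A [] [] R => [.mk A [] [] R]
  | .mk _ B M _ => leavesL B ++ leavesL M
def leavesL : List (MLC I J) → List (MLC I J)
  | [] => []
  | c :: cs => leaves c ++ leavesL cs
end

/-- `callRel u v` holds iff, when TransformCtoT is run on the (well-formed) internal
node `v`, it performs a recursive call on `u`, i.e. `u` is one of the bus or non-bus
children of `v` with an updated requirement set. -/
def callRel (u v : MLC I J) : Prop :=
  MLC.WF v ∧ v.children ≠ [] ∧ ∃ c ∈ v.children, ∃ R' : Finset J, u = c.setReqs R'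

section Aux

variable {I J : Type}

lemma sum_if_zero {α : Type} (l : List α) (p : α → Prop) [DecidablePred p]
    (h : ∀ c ∈ l, ¬ p c) :
    (l.map fun c => if p c then (1:ℕ) else 0).sum = 0 := by
  induction l with
  | nil => simp
  | cons a l ih =>
    simp only [List.map_cons, List.sum_cons]
    rw [if_neg (h a (by simp)), ih (fun c hc => h c (by simp [hc]))]

lemma sum_if_unique {α : Type} (l : List α) (hnd : l.Nodup) (p : α → Prop) [DecidablePred p] (a : α)
    (ha : a ∈ l) (hp : ∀ c, p c ↔ c = a) :
    (l.map fun c => if p c then (1:ℕ) else 0).sum = 1 := by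
  induction l with
  | nil => simp at ha
  | cons b l ih =>
    simp only [List.map_cons, List.sum_cons]
    rcases List.mem_cons.mp ha with hab | ha'
    · subst hab
      rw [if_pos ((hp a).mpr rfl), sum_if_zero]
      intro c hc hpc
      exact (List.nodup_cons.mp hnd).1 (((hp c).mp hpc) ▸ hc)
    · rw [if_neg, ih (List.nodup_cons.mp hnd).2 ha']
      intro hpb
      exact (List.nodup_cons.mp hnd).1 (((hp b).mp hpb) ▸ ha')

lemma reqCountL_eq_sum (j : J) (l : List (MLC I J)) :
    reqCountL j l = (l.map (reqCountM j)).sum := by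
  induction l with
  | nil => simp [reqCountL]
  | cons c cs ih => simp [reqCountL, ih]

lemma reqCountM_eq (j : J) (c : MLC I J) :
    reqCountM j c = (if j ∈ c.reqs then 1 else 0)
      + reqCountL j c.busCh + reqCountL j c.nonbusCh := by
  cases c; rfl

lemma reqCountM_setReqs (j : J) (c : MLC I J) (S : Finset J) :
    reqCountM j (c.setReqs S) = (if j ∈ S then 1 else 0)
      + reqCountL j c.busCh + reqCountL j c.nonbusCh := by
  cases c; rfl

lemma relF_eq_singleton_mem {PR : I → J → Prop} {r : J} {l : List (MLC I J)}
    {c : MLC I J} (h : relF PR r l = [c]) : c ∈ l := by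
  have : c ∈ relF PR r l := by rw [h]; simp
  exact List.mem_of_mem_filter this

lemma wf_nodup {A : Finset I} {B M : List (MLC I J)} {R : Finset J}
    (hwf : MLC.WF (.mk A B M R)) : B.Nodup ∧ M.Nodup := by
  cases hwf with
  | leaf A R h => simp
  | node A B M R hlen hne hpw hun hwfc =>
    have hnd : (B ++ M).Nodup := by
      refine List.Pairwise.imp_of_mem ?_ hpw
      intro a b ha hb hdis hab
      subst hab
      have : a.elems = (∅ : Finset I) := disjoint_self.mp hdis
      rcases hne a ha with ⟨x, hx⟩
      rw [this] at hx
      exact Finset.notMem_empty x hx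
    exact ⟨(List.nodup_append'.mp hnd).1, (List.nodup_append'.mp hnd).2.1⟩

end Aux

/-- Running PropReq on an internal node `(A, B, M, R)` of a well-formed
multilevel clustering with local buses neither loses nor duplicates requirements:
the requirements that stay at the node and the sets of requirements moved into the
individual (bus and non-bus) children are all subsets of `R`, and every `r ∈ R` ends
up in exactly one of these places (counted over all children, so in particular in
the requirement set of at most one child and in no other node). In particular, if
before the call the requirement sets of all nodes of the tree are pairwise disjoint
with union equal to `Jset`, the same holds after the call. -/
theorem propReq_conserves_requirements {I J : Type} [Fintype I] (PR : I → J → Prop)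
    (A : Finset I) (B M : List (MLC I J)) (R : Finset J)
    (hwf : MLC.WF (.mk A B M R)) (hinternal : B ++ M ≠ []) :
    (stayReqs PR B M R ⊆ R) ∧
    (∀ c ∈ B, toBus PR B M R c ⊆ R) ∧
    (∀ c ∈ M, toNonbus PR M R c ⊆ R) ∧
    (∀ r ∈ R,
      (if r ∈ stayReqs PR B M R then 1 else 0)
        + (B.map fun c => if r ∈ toBus PR B M R c then 1 else 0).sum
        + (M.map fun c => if r ∈ toNonbus PR M R c then 1 else 0).sum = 1) ∧
    (∀ Jset : Finset J,
      ((∀ j ∈ Jset, reqCountM j (MLC.mk A B M R) = 1) ∧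
        (∀ j ∉ Jset, reqCountM j (MLC.mk A B M R) = 0)) →
      ((∀ j ∈ Jset, reqCountM j (propReq PR (.mk A B M R)).1 = 1) ∧
        (∀ j ∉ Jset, reqCountM j (propReq PR (.mk A B M R)).1 = 0))) := by
  obtain ⟨hndB, hndM⟩ := wf_nodup hwf
  have hstay : stayReqs PR B M R ⊆ R := Finset.filter_subset _ _
  have hbus : ∀ c ∈ B, toBus PR B M R c ⊆ R := fun c _ => Finset.filter_subset _ _
  have hnb : ∀ c ∈ M, toNonbus PR M R c ⊆ R := fun c _ => Finset.filter_subset _ _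
  have hcount : ∀ r ∈ R, (if r ∈ stayReqs PR B M R then 1 else 0)
        + (B.map fun c => if r ∈ toBus PR B M R c then 1 else 0).sum
        + (M.map fun c => if r ∈ toNonbus PR M R c then 1 else 0).sum = 1 := by
    intro r hr
    by_cases h1 : (relF PR r M).length = 1
    · obtain ⟨c₀, hc₀⟩ := List.length_eq_one_iff.mp h1
      have hmem : c₀ ∈ M := relF_eq_singleton_mem hc₀
      have hs : r ∉ stayReqs PR B M R := by
        simp [stayReqs, Finset.mem_filter, h1]
      rw [if_neg hs]
      have hB0 : (B.map fun c => if r ∈ toBus PR B M R c then 1 else 0).sum = 0 := by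
        apply sum_if_zero
        intro c _ hmem'
        have h := (Finset.mem_filter.mp hmem').2.1
        rw [hc₀] at h
        simp at h
      have hM1 : (M.map fun c => if r ∈ toNonbus PR M R c then 1 else 0).sum = 1 := by
        apply sum_if_unique M hndM _ c₀ hmem
        intro c
        constructor
        · intro hc
          have h := (Finset.mem_filter.mp hc).2
          rw [hc₀] at h
          exact (List.cons.injEq _ _ _ _).mp h |>.1.symm
        · rintro rfl
          exact Finset.mem_filter.mpr ⟨hr, hc₀⟩
      omega
    · by_cases h2 : relF PR r M = [] ∧ (relF PR r B).length = 1
      · obtain ⟨hm, hb⟩ := h2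
        obtain ⟨c₀, hc₀⟩ := List.length_eq_one_iff.mp hb
        have hmem : c₀ ∈ B := relF_eq_singleton_mem hc₀
        have hs : r ∉ stayReqs PR B M R := by
          simp [stayReqs, Finset.mem_filter, hm, hb]
        rw [if_neg hs]
        have hM0 : (M.map fun c => if r ∈ toNonbus PR M R c then 1 else 0).sum = 0 := by
          apply sum_if_zero
          intro c _ hmem'
          have h := (Finset.mem_filter.mp hmem').2
          rw [hm] at h
          cases h
        have hB1 : (B.map fun c => if r ∈ toBus PR B M R c then 1 else 0).sum = 1 := by
          apply sum_if_unique B hndB _ c₀ hmem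
          intro c
          constructor
          · intro hc
            have h := (Finset.mem_filter.mp hc).2.2
            rw [hc₀] at h
            exact (List.cons.injEq _ _ _ _).mp h |>.1.symm
          · rintro rfl
            exact Finset.mem_filter.mpr ⟨hr, hm, hc₀⟩
        omega
      · have hs : r ∈ stayReqs PR B M R := by
          refine Finset.mem_filter.mpr ⟨hr, h1, ?_⟩
          intro h
          exact h2 ⟨h.1, h.2⟩
        rw [if_pos hs]
        have hB0 : (B.map fun c => if r ∈ toBus PR B M R c then 1 else 0).sum = 0 := by
          apply sum_if_zero
          intro c _ hmem'
          have h := (Finset.mem_filter.mp hmem').2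
          exact h2 ⟨h.1, by rw [h.2]; rfl⟩
        have hM0 : (M.map fun c => if r ∈ toNonbus PR M R c then 1 else 0).sum = 0 := by
          apply sum_if_zero
          intro c _ hmem'
          have h := (Finset.mem_filter.mp hmem').2
          exact h1 (by rw [h]; rfl)
        omega
  refine ⟨hstay, hbus, hnb, hcount, ?_⟩
  intro Jset ⟨hJ1, hJ2⟩
  have hbefore : ∀ j : J, reqCountM j (MLC.mk A B M R) =
      (if j ∈ R then 1 else 0)
      + (B.map fun c => (if j ∈ c.reqs then 1 else 0)
          + reqCountL j c.busCh + reqCountL j c.nonbusCh).sum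
      + (M.map fun c => (if j ∈ c.reqs then 1 else 0)
          + reqCountL j c.busCh + reqCountL j c.nonbusCh).sum := by
    intro j
    have eB : List.map (reqCountM j) B = B.map (fun c => (if j ∈ c.reqs then 1 else 0)
        + reqCountL j c.busCh + reqCountL j c.nonbusCh) :=
      List.map_congr_left fun c _ => reqCountM_eq j c
    have eM : List.map (reqCountM j) M = M.map (fun c => (if j ∈ c.reqs then 1 else 0)
        + reqCountL j c.busCh + reqCountL j c.nonbusCh) :=
      List.map_congr_left fun c _ => reqCountM_eq j c
    simp only [reqCountM]
    rw [reqCountL_eq_sum j B, reqCountL_eq_sum j M, eB, eM]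
  have hafter : ∀ j : J, reqCountM j (propReq PR (.mk A B M R)).1 =
      (if j ∈ stayReqs PR B M R then 1 else 0)
      + (B.map fun c => (if j ∈ c.reqs ∪ toBus PR B M R c then 1 else 0)
          + reqCountL j c.busCh + reqCountL j c.nonbusCh).sum
      + (M.map fun c => (if j ∈ c.reqs ∪ toNonbus PR M R c then 1 else 0)
          + reqCountL j c.busCh + reqCountL j c.nonbusCh).sum := by
    intro j
    have hpr : (propReq PR (MLC.mk A B M R)).1 =
        MLC.mk A (B.map fun c => c.setReqs (c.reqs ∪ toBus PR B M R c))
          (M.map fun c => c.setReqs (c.reqs ∪ toNonbus PR M R c))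
          (stayReqs PR B M R) := rfl
    have eB : List.map (reqCountM j ∘ fun c => c.setReqs (c.reqs ∪ toBus PR B M R c)) B
        = B.map (fun c => (if j ∈ c.reqs ∪ toBus PR B M R c then 1 else 0)
            + reqCountL j c.busCh + reqCountL j c.nonbusCh) :=
      List.map_congr_left fun c _ => reqCountM_setReqs j c _
    have eM : List.map (reqCountM j ∘ fun c => c.setReqs (c.reqs ∪ toNonbus PR M R c)) M
        = M.map (fun c => (if j ∈ c.reqs ∪ toNonbus PR M R c then 1 else 0)
            + reqCountL j c.busCh + reqCountL j c.nonbusCh) :=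
      List.map_congr_left fun c _ => reqCountM_setReqs j c _
    rw [hpr]
    simp only [reqCountM]
    rw [reqCountL_eq_sum, reqCountL_eq_sum, List.map_map, List.map_map, eB, eM]
  have hnotR : ∀ j, j ∉ R →
      reqCountM j (propReq PR (.mk A B M R)).1 = reqCountM j (MLC.mk A B M R) := by
    intro j hj
    have hns : j ∉ stayReqs PR B M R := fun h => hj (hstay h)
    have eB2 : (B.map fun c => (if j ∈ c.reqs ∪ toBus PR B M R c then 1 else 0)
        + reqCountL j c.busCh + reqCountL j c.nonbusCh)
        = (B.map fun c => (if j ∈ c.reqs then 1 else 0)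
        + reqCountL j c.busCh + reqCountL j c.nonbusCh) := by
      apply List.map_congr_left
      intro c hc
      have h1 : j ∉ toBus PR B M R c := fun h => hj (hbus c hc h)
      have h2 : (j ∈ c.reqs ∪ toBus PR B M R c) = (j ∈ c.reqs) := by
        simp [Finset.mem_union, h1]
      simp only [h2]
    have eM2 : (M.map fun c => (if j ∈ c.reqs ∪ toNonbus PR M R c then 1 else 0)
        + reqCountL j c.busCh + reqCountL j c.nonbusCh)
        = (M.map fun c => (if j ∈ c.reqs then 1 else 0)
        + reqCountL j c.busCh + reqCountL j c.nonbusCh) := by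
      apply List.map_congr_left
      intro c hc
      have h1 : j ∉ toNonbus PR M R c := fun h => hj (hnb c hc h)
      have h2 : (j ∈ c.reqs ∪ toNonbus PR M R c) = (j ∈ c.reqs) := by
        simp [Finset.mem_union, h1]
      simp only [h2]
    rw [hafter j, hbefore j, if_neg hns, if_neg hj, eB2, eM2]
  constructor
  · intro j hj
    by_cases hjR : j ∈ R
    · have h1 := hJ1 j hj
      rw [hbefore j, if_pos hjR] at h1
      have hB0 : (B.map fun c => (if j ∈ c.reqs then 1 else 0)
          + reqCountL j c.busCh + reqCountL j c.nonbusCh).sum = 0 := by omega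
      have hM0 : (M.map fun c => (if j ∈ c.reqs then 1 else 0)
          + reqCountL j c.busCh + reqCountL j c.nonbusCh).sum = 0 := by omega
      have hBz : ∀ c ∈ B, (if j ∈ c.reqs then 1 else 0)
          + reqCountL j c.busCh + reqCountL j c.nonbusCh = 0 := by
        intro c hc
        exact (List.sum_eq_zero_iff.mp hB0) _ (List.mem_map.mpr ⟨c, hc, rfl⟩)
      have hMz : ∀ c ∈ M, (if j ∈ c.reqs then 1 else 0)
          + reqCountL j c.busCh + reqCountL j c.nonbusCh = 0 := by
        intro c hc
        exact (List.sum_eq_zero_iff.mp hM0) _ (List.mem_map.mpr ⟨c, hc, rfl⟩)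
      rw [hafter j]
      have hBrw : (B.map fun c => (if j ∈ c.reqs ∪ toBus PR B M R c then 1 else 0)
          + reqCountL j c.busCh + reqCountL j c.nonbusCh).sum
          = (B.map fun c => if j ∈ toBus PR B M R c then 1 else 0).sum := by
        have e : (B.map fun c => (if j ∈ c.reqs ∪ toBus PR B M R c then 1 else 0)
            + reqCountL j c.busCh + reqCountL j c.nonbusCh)
            = (B.map fun c => if j ∈ toBus PR B M R c then 1 else 0) := by
          apply List.map_congr_left
          intro c hc
          have h := hBz c hc
          have hjr : j ∉ c.reqs := by
            intro hmem
            rw [if_pos hmem] at h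
            omega
          rw [if_neg hjr] at h
          have h2 : (j ∈ c.reqs ∪ toBus PR B M R c) = (j ∈ toBus PR B M R c) := by
            simp [Finset.mem_union, hjr]
          simp only [h2]
          omega
        rw [e]
      have hMrw : (M.map fun c => (if j ∈ c.reqs ∪ toNonbus PR M R c then 1 else 0)
          + reqCountL j c.busCh + reqCountL j c.nonbusCh).sum
          = (M.map fun c => if j ∈ toNonbus PR M R c then 1 else 0).sum := by
        have e : (M.map fun c => (if j ∈ c.reqs ∪ toNonbus PR M R c then 1 else 0)
            + reqCountL j c.busCh + reqCountL j c.nonbusCh)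
            = (M.map fun c => if j ∈ toNonbus PR M R c then 1 else 0) := by
          apply List.map_congr_left
          intro c hc
          have h := hMz c hc
          have hjr : j ∉ c.reqs := by
            intro hmem
            rw [if_pos hmem] at h
            omega
          rw [if_neg hjr] at h
          have h2 : (j ∈ c.reqs ∪ toNonbus PR M R c) = (j ∈ toNonbus PR M R c) := by
            simp [Finset.mem_union, hjr]
          simp only [h2]
          omega
        rw [e]
      rw [hBrw, hMrw]
      exact hcount j hjR
    · rw [hnotR j hjR]
      exact hJ1 j hj
  · intro j hj
    have h0 := hJ2 j hj
    have hjR : j ∉ R := by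
      intro hjR
      rw [hbefore j, if_pos hjR] at h0
      omega
    rw [hnotR j hjR]
    exact h0
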